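/- Let (X, Y) have density f(x,y) = 2 φ_2(x, y; ρ) Φ((y - ρx) h(x)) on ℝ², with |ρ| < 1, φ_2 the standard bivariate normal density with correlation ρ, Φ the standard normal CDF, and h measurable such that the relevant integrals exist. Then E[Y] = √(2/π) (1 - ρ²) ∫_ℝ h(x) / √(1 + (1-ρ²)h(x)²) · φ(x) dx, where φ is the standard normal density. -/

import Mathlib

open MeasureTheory

noncomputable def stdNormalPDF (x : ℝ) : ℝ :=
  (Real.sqrt (2 * Real.pi))⁻¹ * Real.exp (-x ^ 2 / 2)

noncomputable def stdNormalCDF (t : ℝ) : ℝ :=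
  ∫ u in Set.Iic t, stdNormalPDF u

section Lemmas
open Real Set Filter

lemma pdf_eq' : stdNormalPDF = fun x => (Real.sqrt (2*Real.pi))⁻¹ * Real.exp (-(1/2) * x^2) := by
  funext x; unfold stdNormalPDF; ring_nf

lemma pdf_nonneg (x : ℝ) : 0 ≤ stdNormalPDF x := by
  unfold stdNormalPDF; positivity

lemma continuous_pdf : Continuous stdNormalPDF := by
  unfold stdNormalPDF; fun_prop

lemma pdf_even (x : ℝ) : stdNormalPDF (-x) = stdNormalPDF x := by
  unfold stdNormalPDF; rw [neg_pow]; ring_nf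

lemma integrable_pdf : Integrable stdNormalPDF := by
  rw [pdf_eq']
  exact (integrable_exp_neg_mul_sq (by norm_num : (0:ℝ) < 1/2)).const_mul _

lemma integral_pdf : ∫ x, stdNormalPDF x = 1 := by
  rw [pdf_eq']
  rw [integral_const_mul, integral_gaussian]
  rw [show Real.pi / (1/2) = 2 * Real.pi by ring]
  exact inv_mul_cancel₀ (Real.sqrt_ne_zero'.2 (by positivity))

lemma integrable_mul_pdf : Integrable (fun x => x * stdNormalPDF x) := by
  have h := integrable_rpow_mul_exp_neg_mul_sq (by norm_num : (0:ℝ) < 1/2)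
    (by norm_num : (-1:ℝ) < 1)
  simp only [Real.rpow_one] at h
  have h2 := h.const_mul (Real.sqrt (2*Real.pi))⁻¹
  refine h2.congr (Filter.Eventually.of_forall fun x => ?_)
  rw [pdf_eq']; ring

lemma hasDerivAt_pdf (x : ℝ) : HasDerivAt stdNormalPDF (-x * stdNormalPDF x) x := by
  rw [pdf_eq']
  have h1 : HasDerivAt (fun x : ℝ => -(1/2) * x^2) (-x) x := by
    simpa using (hasDerivAt_pow 2 x).const_mul (-(1/2) : ℝ)
  have := (h1.exp).const_mul (Real.sqrt (2*Real.pi))⁻¹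
  exact this.congr_deriv (by beta_reduce; ring)

end Lemmas
section CDF
open Real Set Filter Topology

lemma cdf_sub (a t : ℝ) : stdNormalCDF t - stdNormalCDF a = ∫ u in a..t, stdNormalPDF u := by
  unfold stdNormalCDF
  exact (intervalIntegral.integral_Iic_sub_Iic (f := stdNormalPDF) (μ := volume) (a := a)
    (b := t) integrable_pdf.integrableOn integrable_pdf.integrableOn)

lemma cdf_eq_add (t : ℝ) :
    stdNormalCDF t = stdNormalCDF 0 + ∫ u in (0:ℝ)..t, stdNormalPDF u := by
  rw [← cdf_sub 0 t]; ring

lemma hasDerivAt_cdf (t : ℝ) : HasDerivAt stdNormalCDF (stdNormalPDF t) t := by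
  have key : HasDerivAt (fun s => stdNormalCDF 0 + ∫ u in (0:ℝ)..s, stdNormalPDF u)
      (stdNormalPDF t) t := by
    refine HasDerivAt.const_add _ ?_
    exact intervalIntegral.integral_hasDerivAt_right
      integrable_pdf.intervalIntegrable
      (continuous_pdf.stronglyMeasurableAtFilter _ _)
      continuous_pdf.continuousAt
  have : stdNormalCDF = fun s => stdNormalCDF 0 + ∫ u in (0:ℝ)..s, stdNormalPDF u :=
    funext cdf_eq_add
  rw [this]; exact key

lemma continuous_cdf : Continuous stdNormalCDF :=
  continuous_iff_continuousAt.2 fun t => (hasDerivAt_cdf t).continuousAt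

lemma cdf_nonneg (t : ℝ) : 0 ≤ stdNormalCDF t :=
  setIntegral_nonneg measurableSet_Iic fun x _ => pdf_nonneg x

lemma cdf_le_one (t : ℝ) : stdNormalCDF t ≤ 1 := by
  rw [← integral_pdf]
  exact setIntegral_le_integral integrable_pdf
    (Filter.Eventually.of_forall fun x => pdf_nonneg x)

lemma tendsto_cdf_atTop : Tendsto stdNormalCDF atTop (𝓝 1) := by
  have h1 : Tendsto (fun t : ℝ => ∫ u in (0:ℝ)..t, stdNormalPDF u) atTop
      (𝓝 (∫ u in Ioi (0:ℝ), stdNormalPDF u)) :=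
    MeasureTheory.intervalIntegral_tendsto_integral_Ioi 0 integrable_pdf.integrableOn tendsto_id
  have h2 := h1.const_add (stdNormalCDF 0)
  have h3 : stdNormalCDF 0 + ∫ u in Ioi (0:ℝ), stdNormalPDF u = 1 := by
    rw [← integral_pdf]
    exact intervalIntegral.integral_Iic_add_Ioi integrable_pdf.integrableOn
      integrable_pdf.integrableOn
  rw [← h3]
  exact h2.congr fun t => (cdf_eq_add t).symm

lemma tendsto_cdf_atBot : Tendsto stdNormalCDF atBot (𝓝 0) := by
  have h1 : Tendsto (fun t : ℝ => ∫ u in t..(0:ℝ), stdNormalPDF u) atBot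
      (𝓝 (∫ u in Iic (0:ℝ), stdNormalPDF u)) :=
    MeasureTheory.intervalIntegral_tendsto_integral_Iic 0 integrable_pdf.integrableOn tendsto_id
  have h2 := (h1.const_sub (stdNormalCDF 0))
  have : (fun t : ℝ => stdNormalCDF 0 - ∫ u in t..(0:ℝ), stdNormalPDF u) = stdNormalCDF := by
    funext t
    rw [← cdf_sub t 0]; ring
  rw [this] at h2
  simpa [stdNormalCDF] using h2
end CDF
section Key
open Real Set Filter Topology

lemma cdf_neg (t : ℝ) : stdNormalCDF (-t) = 1 - stdNormalCDF t := by
  have h1 : stdNormalCDF (-t) = ∫ x in Ioi t, stdNormalPDF x := by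
    unfold stdNormalCDF
    rw [show ∀ s, (∫ u in Iic s, stdNormalPDF u) = ∫ u in Iic s, stdNormalPDF (-u) from
      fun s => by simp_rw [pdf_even]]
    rw [integral_comp_neg_Iic, neg_neg]
  have h2 := intervalIntegral.integral_Iic_add_Ioi (b := t) (f := stdNormalPDF) (μ := volume)
    integrable_pdf.integrableOn integrable_pdf.integrableOn
  rw [integral_pdf] at h2
  rw [h1]
  unfold stdNormalCDF
  linarith

lemma cdf_zero : stdNormalCDF 0 = 1/2 := by
  have := cdf_neg 0
  rw [neg_zero] at this
  linarith

lemma integrable_pdf_mul_cdf (c : ℝ) :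
    Integrable (fun u => stdNormalPDF u * stdNormalCDF (c*u)) := by
  refine integrable_pdf.mono' ?_ (Filter.Eventually.of_forall fun u => ?_)
  · exact (continuous_pdf.mul (continuous_cdf.comp (continuous_const.mul continuous_id))).aestronglyMeasurable
  · rw [Real.norm_eq_abs, abs_mul, abs_of_nonneg (pdf_nonneg u), abs_of_nonneg (cdf_nonneg _)]
    calc stdNormalPDF u * stdNormalCDF (c*u) ≤ stdNormalPDF u * 1 :=
          mul_le_mul_of_nonneg_left (cdf_le_one _) (pdf_nonneg u)
      _ = stdNormalPDF u := mul_one _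

lemma integrable_id_mul_pdf_mul_cdf (c : ℝ) :
    Integrable (fun u => u * stdNormalPDF u * stdNormalCDF (c*u)) := by
  refine integrable_mul_pdf.abs.mono' ?_ (Filter.Eventually.of_forall fun u => ?_)
  · exact ((continuous_id.mul continuous_pdf).mul
      (continuous_cdf.comp (continuous_const.mul continuous_id))).aestronglyMeasurable
  · rw [Real.norm_eq_abs, abs_mul]
    calc |u * stdNormalPDF u| * |stdNormalCDF (c*u)| ≤ |u * stdNormalPDF u| * 1 := by
          refine mul_le_mul_of_nonneg_left ?_ (abs_nonneg _)
          rw [abs_of_nonneg (cdf_nonneg _)]; exact cdf_le_one _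
      _ = |u * stdNormalPDF u| := mul_one _

lemma tendsto_pdf_atTop : Tendsto stdNormalPDF atTop (𝓝 0) := by
  rw [pdf_eq']
  have h1 : Tendsto (fun x : ℝ => -(1/2) * x^2) atTop atBot := by
    refine (tendsto_pow_atTop (two_ne_zero)).const_mul_atTop_of_neg (by norm_num)
  have := (Real.tendsto_exp_atBot.comp h1).const_mul (Real.sqrt (2*Real.pi))⁻¹
  simpa using this

lemma tendsto_pdf_atBot : Tendsto stdNormalPDF atBot (𝓝 0) := by
  have : stdNormalPDF = fun x => stdNormalPDF (-x) := by funext x; rw [pdf_even]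
  rw [this]
  exact tendsto_pdf_atTop.comp tendsto_neg_atBot_atTop

lemma tendsto_pdf_mul_cdf_atTop (c : ℝ) :
    Tendsto (fun u => stdNormalPDF u * stdNormalCDF (c*u)) atTop (𝓝 0) := by
  refine squeeze_zero_norm (fun u => ?_) tendsto_pdf_atTop
  rw [Real.norm_eq_abs, abs_mul, abs_of_nonneg (pdf_nonneg u), abs_of_nonneg (cdf_nonneg _)]
  calc stdNormalPDF u * stdNormalCDF (c*u) ≤ stdNormalPDF u * 1 :=
        mul_le_mul_of_nonneg_left (cdf_le_one _) (pdf_nonneg u)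
    _ = stdNormalPDF u := mul_one _

lemma tendsto_pdf_mul_cdf_atBot (c : ℝ) :
    Tendsto (fun u => stdNormalPDF u * stdNormalCDF (c*u)) atBot (𝓝 0) := by
  refine squeeze_zero_norm (fun u => ?_) tendsto_pdf_atBot
  rw [Real.norm_eq_abs, abs_mul, abs_of_nonneg (pdf_nonneg u), abs_of_nonneg (cdf_nonneg _)]
  calc stdNormalPDF u * stdNormalCDF (c*u) ≤ stdNormalPDF u * 1 :=
        mul_le_mul_of_nonneg_left (cdf_le_one _) (pdf_nonneg u)
    _ = stdNormalPDF u := mul_one _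

end Key
section FTC
open Real Set Filter Topology

lemma integral_id_mul_pdf : ∫ u : ℝ, u * stdNormalPDF u = 0 := by
  have hd : ∀ u : ℝ, HasDerivAt (fun v => -stdNormalPDF v) (u * stdNormalPDF u) u := by
    intro u
    have := (hasDerivAt_pdf u).neg
    exact this.congr_deriv (by ring)
  have := MeasureTheory.integral_of_hasDerivAt_of_tendsto hd integrable_mul_pdf
    (tendsto_pdf_atBot.neg) (tendsto_pdf_atTop.neg)
  simpa using this

lemma key_integral (c : ℝ) :
    ∫ u : ℝ, u * stdNormalPDF u * stdNormalCDF (c*u)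
      = c / Real.sqrt (2*Real.pi*(1+c^2)) := by
  set s := Real.sqrt (1 + c^2) with hs
  have hs0 : 0 < s := Real.sqrt_pos.2 (by positivity)
  have hs2 : s^2 = 1 + c^2 := Real.sq_sqrt (by positivity)
  set K := c / Real.sqrt (2*Real.pi*(1+c^2)) with hK
  have hKs : K * s = c * (Real.sqrt (2*Real.pi))⁻¹ := by
    rw [hK, show 2*Real.pi*(1+c^2) = (2*Real.pi)*(1+c^2) by ring,
      Real.sqrt_mul (by positivity), ← hs]
    field_simp
  set F : ℝ → ℝ := fun u => -(stdNormalPDF u * stdNormalCDF (c*u)) + K * stdNormalCDF (s*u)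
    with hF
  have hderiv : ∀ u, HasDerivAt F (u * stdNormalPDF u * stdNormalCDF (c*u)) u := by
    intro u
    have hc : HasDerivAt (fun v : ℝ => c * v) c u := by
      simpa using (hasDerivAt_id u).const_mul c
    have hsu : HasDerivAt (fun v : ℝ => s * v) s u := by
      simpa using (hasDerivAt_id u).const_mul s
    have h1 : HasDerivAt (fun v => stdNormalPDF v * stdNormalCDF (c*v))
        (-u * stdNormalPDF u * stdNormalCDF (c*u) + stdNormalPDF u * (stdNormalPDF (c*u) * c)) u := by
      exact (hasDerivAt_pdf u).mul ((hasDerivAt_cdf (c*u)).comp u hc)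
    have h2 : HasDerivAt (fun v => K * stdNormalCDF (s*v)) (K * (stdNormalPDF (s*u) * s)) u :=
      ((hasDerivAt_cdf (s*u)).comp u hsu).const_mul K
    have h3 := (h1.neg).add h2
    refine h3.congr_deriv ?_
    have key : K * (stdNormalPDF (s*u) * s) = stdNormalPDF u * (stdNormalPDF (c*u) * c) := by
      unfold stdNormalPDF
      have e1 : -(s*u)^2/2 = -u^2/2 + -(c*u)^2/2 := by
        have : (s*u)^2 = s^2 * u^2 := by ring
        rw [this, hs2]; ring
      rw [e1, Real.exp_add]
      have e2 : (Real.sqrt (2*Real.pi))⁻¹ * (Real.sqrt (2*Real.pi))⁻¹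
          = (2*Real.pi)⁻¹ := by
        rw [← mul_inv, Real.mul_self_sqrt (by positivity)]
      linear_combination ((Real.sqrt (2*Real.pi))⁻¹ * Real.exp (-u^2/2)
        * Real.exp (-(c*u)^2/2)) * hKs
    rw [key]; ring
  have hbot : Tendsto F atBot (𝓝 0) := by
    have t1 := (tendsto_pdf_mul_cdf_atBot c).neg
    have t2 : Tendsto (fun u : ℝ => K * stdNormalCDF (s*u)) atBot (𝓝 (K * 0)) := by
      exact (tendsto_cdf_atBot.comp (tendsto_const_mul_atBot_of_pos hs0 |>.2 tendsto_id)).const_mul K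
    have := t1.add t2
    simpa using this
  have htop : Tendsto F atTop (𝓝 K) := by
    have t1 := (tendsto_pdf_mul_cdf_atTop c).neg
    have t2 : Tendsto (fun u : ℝ => K * stdNormalCDF (s*u)) atTop (𝓝 (K * 1)) := by
      exact (tendsto_cdf_atTop.comp (tendsto_const_mul_atTop_of_pos hs0 |>.2 tendsto_id)).const_mul K
    have := t1.add t2
    simpa using this
  have := MeasureTheory.integral_of_hasDerivAt_of_tendsto hderiv
    (integrable_id_mul_pdf_mul_cdf c) hbot htop
  simpa using this

lemma half_integral (c : ℝ) :
    ∫ u : ℝ, stdNormalPDF u * stdNormalCDF (c*u) = 1/2 := by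
  have hneg : ∫ u : ℝ, stdNormalPDF u * stdNormalCDF (c*u)
      = ∫ u : ℝ, stdNormalPDF u * (1 - stdNormalCDF (c*u)) := by
    conv_lhs => rw [← MeasureTheory.integral_neg_eq_self
      (fun u => stdNormalPDF u * stdNormalCDF (c*u)) volume]
    congr 1
    funext u
    rw [pdf_even, show c * -u = -(c*u) by ring, cdf_neg]
  have hsplit : ∫ u : ℝ, stdNormalPDF u * (1 - stdNormalCDF (c*u))
      = (∫ u : ℝ, stdNormalPDF u) - ∫ u : ℝ, stdNormalPDF u * stdNormalCDF (c*u) := by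
    rw [← MeasureTheory.integral_sub integrable_pdf (integrable_pdf_mul_cdf c)]
    congr 1; funext u; ring
  rw [integral_pdf] at hsplit
  have := hneg.trans hsplit
  linarith

end FTC
/-- Standard bivariate normal density with correlation ρ. -/
noncomputable def biNormalPDF (ρ : ℝ) (p : ℝ × ℝ) : ℝ :=
  (2 * Real.pi * Real.sqrt (1 - ρ ^ 2))⁻¹ *
    Real.exp (-(p.1 ^ 2 - 2 * ρ * p.1 * p.2 + p.2 ^ 2) / (2 * (1 - ρ ^ 2)))
section Inner
open Real Set Filter Topology

variable {ρ : ℝ}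

lemma biNormal_eq (hρ : |ρ| < 1) (x u : ℝ) :
    biNormalPDF ρ (x, ρ*x + Real.sqrt (1-ρ^2) * u)
      = stdNormalPDF x * stdNormalPDF u * (Real.sqrt (1-ρ^2))⁻¹ := by
  have h1 : 0 < 1 - ρ^2 := by
    have := abs_lt.1 hρ; nlinarith
  set σ := Real.sqrt (1-ρ^2) with hσ
  have hσ0 : 0 < σ := Real.sqrt_pos.2 h1
  have hσ2 : σ^2 = 1 - ρ^2 := Real.sq_sqrt h1.le
  unfold biNormalPDF stdNormalPDF
  simp only
  have harg : -(x ^ 2 - 2 * ρ * x * (ρ*x + σ*u) + (ρ*x + σ*u) ^ 2) / (2 * (1 - ρ ^ 2))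
      = -x^2/2 + -u^2/2 := by
    rw [div_eq_iff (by positivity)]
    linear_combination (-u^2) * hσ2
  rw [harg, Real.exp_add]
  have e2 : (Real.sqrt (2*Real.pi))⁻¹ * (Real.sqrt (2*Real.pi))⁻¹ = (2*Real.pi)⁻¹ := by
    rw [← mul_inv, Real.mul_self_sqrt (by positivity)]
  rw [show (2*Real.pi*σ)⁻¹ = (2*Real.pi)⁻¹ * σ⁻¹ by rw [mul_inv]]
  linear_combination (Real.exp (-x^2/2) * Real.exp (-u^2/2) * σ⁻¹) * e2.symm

lemma inner_eq (hρ : |ρ| < 1) (h : ℝ → ℝ) (x : ℝ) :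
    ∫ y : ℝ, y * (2 * biNormalPDF ρ (x, y) * stdNormalCDF ((y - ρ*x) * h x))
      = ρ * x * stdNormalPDF x
        + Real.sqrt (2/Real.pi) * (1-ρ^2) * (h x / Real.sqrt (1+(1-ρ^2) * h x^2))
          * stdNormalPDF x := by
  have h1 : 0 < 1 - ρ^2 := by
    have := abs_lt.1 hρ; nlinarith
  set σ := Real.sqrt (1-ρ^2) with hσ
  have hσ0 : 0 < σ := Real.sqrt_pos.2 h1
  have hσ2 : σ^2 = 1 - ρ^2 := Real.sq_sqrt h1.le
  set f : ℝ → ℝ := fun y => y * (2 * biNormalPDF ρ (x, y) * stdNormalCDF ((y - ρ*x) * h x))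
    with hf
  set c : ℝ := σ * h x with hc
  -- change of variables
  have step1 : ∫ y, f y = σ * ∫ u, f (ρ*x + σ*u) := by
    have ht : ∫ y, f (y + ρ*x) = ∫ y, f y :=
      MeasureTheory.integral_add_right_eq_self f (ρ*x)
    have hm := MeasureTheory.Measure.integral_comp_mul_left (fun y => f (y + ρ*x)) σ
    rw [ht] at hm
    calc ∫ y, f y = σ * ∫ u, f (σ*u + ρ*x) := by
          rw [hm, abs_of_pos (inv_pos.2 hσ0), smul_eq_mul, ← mul_assoc,
            mul_inv_cancel₀ hσ0.ne', one_mul]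
      _ = σ * ∫ u, f (ρ*x + σ*u) := by
          congr 1
          exact MeasureTheory.integral_congr_ae
            (Filter.Eventually.of_forall fun u => by show f _ = f _; rw [add_comm])
  have step2 : ∀ u : ℝ, f (ρ*x + σ*u)
      = (2 * (ρ*x) * stdNormalPDF x * σ⁻¹) * (stdNormalPDF u * stdNormalCDF (c*u))
        + (2 * stdNormalPDF x) * (u * stdNormalPDF u * stdNormalCDF (c*u)) := by
    intro u
    rw [hf]
    simp only
    rw [biNormal_eq hρ x u, show ρ*x + σ*u - ρ*x = σ*u by ring,
      show σ*u * h x = c*u by rw [hc]; ring]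
    field_simp
    ring
  rw [step1]
  have step3 : ∫ u, f (ρ*x + σ*u)
      = (2 * (ρ*x) * stdNormalPDF x * σ⁻¹) * (1/2)
        + (2 * stdNormalPDF x) * (c / Real.sqrt (2*Real.pi*(1+c^2))) := by
    rw [MeasureTheory.integral_congr_ae (Filter.Eventually.of_forall step2)]
    rw [MeasureTheory.integral_add
      (((integrable_pdf_mul_cdf c)).const_mul _)
      ((integrable_id_mul_pdf_mul_cdf c).const_mul _)]
    rw [MeasureTheory.integral_const_mul, MeasureTheory.integral_const_mul,
      half_integral c, key_integral c]
  rw [step3]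
  -- now algebra
  have hc2 : 1 + c^2 = 1 + (1-ρ^2) * h x^2 := by
    rw [hc]; rw [mul_pow, hσ2]
  have hsqrt2pi : Real.sqrt (2*Real.pi*(1+c^2))
      = Real.sqrt (2*Real.pi) * Real.sqrt (1+(1-ρ^2) * h x^2) := by
    rw [hc2, show 2*Real.pi*(1+(1-ρ^2)*h x^2) = (2*Real.pi)*(1+(1-ρ^2)*h x^2) by ring,
      Real.sqrt_mul (by positivity)]
  have h2pi : Real.sqrt (2/Real.pi) = 2 / Real.sqrt (2*Real.pi) := by
    rw [eq_div_iff (Real.sqrt_ne_zero'.2 (by positivity)), ← Real.sqrt_mul (by positivity)]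
    rw [show 2/Real.pi*(2*Real.pi) = 4 by field_simp; ring]
    rw [show (4:ℝ) = 2^2 by norm_num, Real.sqrt_sq (by norm_num)]
  rw [hsqrt2pi, h2pi, hc, ← hσ2]
  have hQ' : 0 < Real.sqrt (1+σ^2*h x^2) := Real.sqrt_pos.2 (by positivity)
  have hP : 0 < Real.sqrt (2*Real.pi) := Real.sqrt_pos.2 (by positivity)
  field_simp

end Inner
theorem stmt9 (ρ : ℝ) (hρ : |ρ| < 1) (h : ℝ → ℝ) (hh : Measurable h)
    (hint : Integrable (fun p : ℝ × ℝ =>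
      p.2 * (2 * biNormalPDF ρ p * stdNormalCDF ((p.2 - ρ * p.1) * h p.1)))) :
    ∫ p : ℝ × ℝ, p.2 * (2 * biNormalPDF ρ p * stdNormalCDF ((p.2 - ρ * p.1) * h p.1))
      = Real.sqrt (2 / Real.pi) * (1 - ρ ^ 2) *
        ∫ x : ℝ, h x / Real.sqrt (1 + (1 - ρ ^ 2) * h x ^ 2) * stdNormalPDF x := by
  have h1 : 0 < 1 - ρ^2 := by
    have := abs_lt.1 hρ; nlinarith
  rw [MeasureTheory.Measure.volume_eq_prod ℝ ℝ] at hint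
  have hfub := MeasureTheory.integral_prod _ hint
  rw [show (volume : Measure (ℝ × ℝ)) = (volume : Measure ℝ).prod volume from
    MeasureTheory.Measure.volume_eq_prod ℝ ℝ, hfub]
  have houter : Integrable (fun x => ∫ y : ℝ,
      y * (2 * biNormalPDF ρ (x, y) * stdNormalCDF ((y - ρ * x) * h x))) :=
    hint.integral_prod_left
  set T : ℝ → ℝ := fun x => Real.sqrt (2/Real.pi) * (1-ρ^2)
      * (h x / Real.sqrt (1+(1-ρ^2) * h x^2)) * stdNormalPDF x with hT
  set F1 : ℝ → ℝ := fun x => ρ * x * stdNormalPDF x with hF1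
  have hin : (fun x => ∫ y : ℝ,
      y * (2 * biNormalPDF ρ (x, y) * stdNormalCDF ((y - ρ * x) * h x)))
      = fun x => F1 x + T x := funext fun x => inner_eq hρ h x
  rw [hin] at houter ⊢
  have hF1int : Integrable F1 := by
    have := integrable_mul_pdf.const_mul ρ
    refine this.congr (Filter.Eventually.of_forall fun x => ?_)
    rw [hF1]; ring
  have hTint : Integrable T := by
    have := houter.sub hF1int
    refine this.congr (Filter.Eventually.of_forall fun x => ?_)
    simp
  rw [MeasureTheory.integral_add hF1int hTint]
  have hz : ∫ x, F1 x = 0 := by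
    rw [show F1 = fun x => ρ * (x * stdNormalPDF x) from funext fun x => by rw [hF1]; ring]
    rw [MeasureTheory.integral_const_mul, integral_id_mul_pdf, mul_zero]
  rw [hz, zero_add]
  rw [show T = fun x => (Real.sqrt (2/Real.pi) * (1-ρ^2))
      * (h x / Real.sqrt (1+(1-ρ^2) * h x^2) * stdNormalPDF x) from
    funext fun x => by rw [hT]; ring]
  rw [MeasureTheory.integral_const_mul, mul_assoc]
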